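/- Let V₆ be the space of complex homogeneous polynomials of degree 6 in z₀, z₁ with the SU(2)-action (ρ₆(g)f)(z) = f(z·g), and let K̃_{[a]} ⊂ SU(2) be the order-24 subgroup generated by the order-8 quaternion group K̃₀ and B = [[(1+i)/2, (1+i)/2], [(−1+i)/2, (1−i)/2]]. Then the fixed subspace (V₆)^{K̃_{[a]}} is one-dimensional, spanned by w′₁ = (1/2)(v₁ − v₅) where v_k = z₀^{6−k} z₁^{k} / √(k!(6−k)!). -/
import Mathlib

open MvPolynomial

/-- The action of a `2×2` complex matrix `g` on polynomials in `z₀, z₁` given by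
`(ρ(g) f)(z) = f(z·g)`. -/
noncomputable def actPoly (g : Matrix (Fin 2) (Fin 2) ℂ) (f : MvPolynomial (Fin 2) ℂ) :
    MvPolynomial (Fin 2) ℂ :=
  MvPolynomial.aeval (fun k : Fin 2 => ∑ i : Fin 2, MvPolynomial.C (g i k) * X i) f

/-- The quaternion group of order `8` in `SU(2)`. -/
noncomputable def Q8 : Set (Matrix (Fin 2) (Fin 2) ℂ) :=
  {1, -1, !![0, -1; 1, 0], -(!![0, -1; 1, 0]),
   !![Complex.I, 0; 0, -Complex.I], -(!![Complex.I, 0; 0, -Complex.I]),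
   !![0, Complex.I; Complex.I, 0], -(!![0, Complex.I; Complex.I, 0])}

/-- The extra generator `B` of the order-24 group `K̃_{[a]}`. -/
noncomputable def Bmat : Matrix (Fin 2) (Fin 2) ℂ :=
  !![(1 + Complex.I) / 2, (1 + Complex.I) / 2;
     (-1 + Complex.I) / 2, (1 - Complex.I) / 2]

/-- `w′₁ = (1/2)(v₁ − v₅)` where `v_k = z₀^{6−k} z₁^k / √(k!(6−k)!)`. -/
noncomputable def w1' : MvPolynomial (Fin 2) ℂ :=
  ((1 / 2 : ℂ) * ((Real.sqrt 120 : ℝ) : ℂ)⁻¹) • (X 0 ^ 5 * X 1 - X 0 * X 1 ^ 5)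

section Aux

open Complex

noncomputable def Pp : MvPolynomial (Fin 2) ℂ := X 0 ^ 5 * X 1 - X 0 * X 1 ^ 5

lemma I3 : (I:ℂ)^3 = -I := by rw [pow_succ, Complex.I_sq]; ring
lemma I4 : (I:ℂ)^4 = 1 := by rw [pow_succ, I3, neg_mul, Complex.I_mul_I, neg_neg]
lemma I5 : (I:ℂ)^5 = I := by rw [pow_succ, I4, one_mul]
lemma I6 : (I:ℂ)^6 = -1 := by rw [pow_succ, I5, Complex.I_mul_I]

lemma fixB : actPoly Bmat Pp = Pp := by
  apply MvPolynomial.funext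
  intro x
  simp [actPoly, Bmat, Pp, Fin.sum_univ_two]
  ring_nf
  simp only [Complex.I_sq, I3, I4, I5, I6]
  ring

lemma fixQ8 : ∀ g ∈ Q8, actPoly g Pp = Pp := by
  intro g hg
  apply MvPolynomial.funext
  intro x
  rcases hg with h|h|h|h|h|h|h|h <;> subst h
  all_goals try simp [actPoly, Pp, Fin.sum_univ_two, Matrix.one_apply, Matrix.neg_apply]
  all_goals try ring_nf
  all_goals try simp only [Complex.I_sq, I3, I4, I5, I6]
  all_goals ring

lemma actPoly_smul (g : Matrix (Fin 2) (Fin 2) ℂ) (c : ℂ) (f : MvPolynomial (Fin 2) ℂ) :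
    actPoly g (c • f) = c • actPoly g f :=
  map_smul (MvPolynomial.aeval _) c f

lemma actD_monomial (e : Fin 2 →₀ ℕ) (c : ℂ) :
    actPoly !![I, 0; 0, -I] (monomial e c)
      = monomial e (I ^ (e 0) * (-I) ^ (e 1) * c) := by
  rw [actPoly, aeval_monomial, monomial_eq,
    Finsupp.prod_fintype _ _ (fun i => pow_zero _),
    Finsupp.prod_fintype _ _ (fun i => pow_zero _), Fin.prod_univ_two, Fin.prod_univ_two]
  simp [Fin.sum_univ_two, MvPolynomial.algebraMap_eq, mul_pow]
  ring

lemma actJ_monomial (e : Fin 2 →₀ ℕ) (c : ℂ) :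
    actPoly !![0, -1; 1, 0] (monomial e c)
      = monomial (Finsupp.single 0 (e 1) + Finsupp.single 1 (e 0)) ((-1) ^ (e 1) * c) := by
  rw [actPoly, aeval_monomial, monomial_eq,
    Finsupp.prod_fintype _ _ (fun i => pow_zero _),
    Finsupp.prod_fintype _ _ (fun i => pow_zero _), Fin.prod_univ_two, Fin.prod_univ_two]
  simp [Fin.sum_univ_two, MvPolynomial.algebraMap_eq, mul_pow, Finsupp.single_apply]
  ring

lemma coeff_actD (f : MvPolynomial (Fin 2) ℂ) (d : Fin 2 →₀ ℕ) :
    coeff d (actPoly !![I, 0; 0, -I] f) = I ^ (d 0) * (-I) ^ (d 1) * coeff d f := by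
  conv_lhs => rw [f.as_sum]
  rw [show actPoly !![I, 0; 0, -I] (∑ v ∈ f.support, monomial v (coeff v f))
      = ∑ v ∈ f.support, actPoly !![I, 0; 0, -I] (monomial v (coeff v f)) from map_sum _ _ _]
  rw [coeff_sum]
  simp only [actD_monomial, coeff_monomial]
  rw [Finset.sum_ite_eq' f.support d]
  split
  · rfl
  · next h => rw [notMem_support_iff.mp h]; ring

lemma finsupp2_ext {d e : Fin 2 →₀ ℕ} (h0 : d 0 = e 0) (h1 : d 1 = e 1) : d = e := by
  ext i; fin_cases i <;> assumption

lemma coeff_actJ (f : MvPolynomial (Fin 2) ℂ) (d : Fin 2 →₀ ℕ) :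
    coeff d (actPoly !![0, -1; 1, 0] f)
      = (-1) ^ (d 0) * coeff (Finsupp.single 0 (d 1) + Finsupp.single 1 (d 0)) f := by
  conv_lhs => rw [f.as_sum]
  rw [show actPoly !![0, -1; 1, 0] (∑ v ∈ f.support, monomial v (coeff v f))
      = ∑ v ∈ f.support, actPoly !![0, -1; 1, 0] (monomial v (coeff v f)) from map_sum _ _ _]
  rw [coeff_sum]
  simp only [actJ_monomial, coeff_monomial]
  rw [Finset.sum_eq_single (Finsupp.single 0 (d 1) + Finsupp.single 1 (d 0))]
  · rw [if_pos (finsupp2_ext (by simp) (by simp))]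
    simp [Finsupp.single_apply]
  · intro e _ hne
    rw [if_neg]
    intro hEq
    apply hne
    apply finsupp2_ext
    · have := congrArg (fun s : Fin 2 →₀ ℕ => s 1) hEq; simpa [Finsupp.single_apply] using this
    · have := congrArg (fun s : Fin 2 →₀ ℕ => s 0) hEq; simpa [Finsupp.single_apply] using this
  · intro h
    rw [notMem_support_iff.mp h]
    simp

lemma dd_eq_iff (a b : ℕ) (d : Fin 2 →₀ ℕ) :
    (Finsupp.single 0 a + Finsupp.single 1 b = d) ↔ (d 0 = a ∧ d 1 = b) := by
  constructor
  · rintro rfl; simp [Finsupp.single_apply]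
  · rintro ⟨h0, h1⟩
    exact finsupp2_ext (by simp [h0, Finsupp.single_apply]) (by simp [h1, Finsupp.single_apply])

lemma coeff_Pp (d : Fin 2 →₀ ℕ) :
    coeff d Pp = (if d 0 = 5 ∧ d 1 = 1 then 1 else 0) - (if d 0 = 1 ∧ d 1 = 5 then 1 else 0) := by
  have h1 : (X 0 ^ 5 * X 1 : MvPolynomial (Fin 2) ℂ)
      = monomial (Finsupp.single 0 5 + Finsupp.single 1 1) 1 := by
    rw [show (X 1 : MvPolynomial (Fin 2) ℂ) = X 1 ^ 1 from (pow_one _).symm,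
      X_pow_eq_monomial, X_pow_eq_monomial, monomial_mul, one_mul]
  have h2 : (X 0 * X 1 ^ 5 : MvPolynomial (Fin 2) ℂ)
      = monomial (Finsupp.single 0 1 + Finsupp.single 1 5) 1 := by
    rw [show (X 0 : MvPolynomial (Fin 2) ℂ) = X 0 ^ 1 from (pow_one _).symm,
      X_pow_eq_monomial, X_pow_eq_monomial, monomial_mul, one_mul]
  rw [Pp, coeff_sub, h1, h2, coeff_monomial, coeff_monomial]
  simp only [dd_eq_iff]

lemma deg2 (d : Fin 2 →₀ ℕ) : d.degree = d 0 + d 1 := by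
  rw [show d.degree = ∑ i ∈ d.support, d i from rfl,
    Finset.sum_subset (Finset.subset_univ _)
      (fun i _ hi => Finsupp.notMem_support_iff.mp hi), Fin.sum_univ_two]

lemma hPp : Pp.IsHomogeneous 6 := by
  have h1 : ((X 0 : MvPolynomial (Fin 2) ℂ) ^ 5 * X 1).IsHomogeneous 6 := by
    simpa using ((isHomogeneous_X ℂ (0 : Fin 2)).pow 5).mul (isHomogeneous_X ℂ 1)
  have h2 : ((X 0 : MvPolynomial (Fin 2) ℂ) * X 1 ^ 5).IsHomogeneous 6 := by
    simpa using (isHomogeneous_X ℂ (0 : Fin 2)).mul ((isHomogeneous_X ℂ (1 : Fin 2)).pow 5)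
  exact h1.sub h2

lemma smul_homog (c : ℂ) (p : MvPolynomial (Fin 2) ℂ) (h : p.IsHomogeneous 6) :
    (c • p).IsHomogeneous 6 := by
  rw [MvPolynomial.smul_eq_C_mul]
  simpa using (isHomogeneous_C _ c).mul h

end Aux

/-- the subspace of `V₆` fixed by the order-24 group generated by the
quaternion group `K̃₀` and `B` is one-dimensional, spanned by `w′₁`. -/
theorem stmt12 :
    {f : MvPolynomial (Fin 2) ℂ | f.IsHomogeneous 6 ∧
        (∀ g ∈ Q8, actPoly g f = f) ∧ actPoly Bmat f = f}
      = {f : MvPolynomial (Fin 2) ℂ | ∃ c : ℂ, f = c • w1'} := by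
  have hw : w1' = ((1 / 2 : ℂ) * ((Real.sqrt 120 : ℝ) : ℂ)⁻¹) • Pp := rfl
  have hs : ((1 / 2 : ℂ) * ((Real.sqrt 120 : ℝ) : ℂ)⁻¹) ≠ 0 := by
    have h120 : Real.sqrt 120 ≠ 0 := by positivity
    simp [h120]
  ext f
  simp only [Set.mem_setOf_eq]
  constructor
  · rintro ⟨hf, hQQ, hB⟩
    refine ⟨coeff (Finsupp.single 0 5 + Finsupp.single 1 1) f /
      ((1 / 2 : ℂ) * ((Real.sqrt 120 : ℝ) : ℂ)⁻¹), ?_⟩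
    rw [hw, smul_smul, div_mul_cancel₀ _ hs]
    have hD := hQQ !![Complex.I, 0; 0, -Complex.I] (by simp [Q8])
    have hJ := hQQ !![0, -1; 1, 0] (by simp [Q8])
    have eD : ∀ d : Fin 2 →₀ ℕ,
        Complex.I ^ (d 0) * (-Complex.I) ^ (d 1) * coeff d f = coeff d f := fun d => by
      rw [← coeff_actD, hD]
    have eJ : ∀ d : Fin 2 →₀ ℕ,
        (-1 : ℂ) ^ (d 0) * coeff (Finsupp.single 0 (d 1) + Finsupp.single 1 (d 0)) f
          = coeff d f := fun d => by
      rw [← coeff_actJ, hJ]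
    apply MvPolynomial.ext
    intro d
    rw [coeff_smul, smul_eq_mul, coeff_Pp]
    have hrep : d = Finsupp.single 0 (d 0) + Finsupp.single 1 (d 1) :=
      (finsupp2_ext (by simp [Finsupp.single_apply]) (by simp [Finsupp.single_apply])).symm
    by_cases hdeg : d 0 + d 1 = 6
    · have h6 : d 1 = 0 ∨ d 1 = 1 ∨ d 1 = 2 ∨ d 1 = 3 ∨ d 1 = 4 ∨ d 1 = 5 ∨ d 1 = 6 := by omega
      rcases h6 with hd1|hd1|hd1|hd1|hd1|hd1|hd1
      -- m = 0
      · have hd0 : d 0 = 6 := by omega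
        have h2 := eD d
        rw [hd0, hd1] at h2 hrep ⊢
        rw [hrep] at h2 ⊢
        rw [if_neg (by norm_num), if_neg (by norm_num)]
        have hval : (Complex.I : ℂ) ^ (6:ℕ) * (-Complex.I) ^ (0:ℕ) = -1 := by
          norm_num [I6]
        rw [hval] at h2
        linear_combination (-1/2 : ℂ) * h2
      -- m = 1
      · have hd0 : d 0 = 5 := by omega
        rw [hd0, hd1] at hrep ⊢
        rw [hrep]
        rw [if_pos (by norm_num), if_neg (by norm_num)]
        ring
      -- m = 2
      · have hd0 : d 0 = 4 := by omega
        have h2 := eD d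
        rw [hd0, hd1] at h2 hrep ⊢
        rw [hrep] at h2 ⊢
        rw [if_neg (by norm_num), if_neg (by norm_num)]
        have hval : (Complex.I : ℂ) ^ (4:ℕ) * (-Complex.I) ^ (2:ℕ) = -1 := by
          rw [I4, neg_pow, Complex.I_sq]; norm_num
        rw [hval] at h2
        linear_combination (-1/2 : ℂ) * h2
      -- m = 3
      · have hd0 : d 0 = 3 := by omega
        have h2 := eJ d
        rw [hd0, hd1] at h2 hrep ⊢
        rw [hrep] at h2 ⊢
        rw [if_neg (by norm_num), if_neg (by norm_num)]
        linear_combination (-1/2 : ℂ) * h2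
      -- m = 4
      · have hd0 : d 0 = 2 := by omega
        have h2 := eD d
        rw [hd0, hd1] at h2 hrep ⊢
        rw [hrep] at h2 ⊢
        rw [if_neg (by norm_num), if_neg (by norm_num)]
        have hval : (Complex.I : ℂ) ^ (2:ℕ) * (-Complex.I) ^ (4:ℕ) = -1 := by
          rw [Complex.I_sq, neg_pow, I4]; norm_num
        rw [hval] at h2
        linear_combination (-1/2 : ℂ) * h2
      -- m = 5
      · have hd0 : d 0 = 1 := by omega
        have h2 := eJ d
        rw [hd0, hd1] at h2 hrep ⊢
        rw [hrep] at h2 ⊢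
        rw [if_neg (by norm_num), if_pos (by norm_num)]
        linear_combination -h2
      -- m = 6
      · have hd0 : d 0 = 0 := by omega
        have h2 := eD d
        rw [hd0, hd1] at h2 hrep ⊢
        rw [hrep] at h2 ⊢
        rw [if_neg (by norm_num), if_neg (by norm_num)]
        have hval : (Complex.I : ℂ) ^ (0:ℕ) * (-Complex.I) ^ (6:ℕ) = -1 := by
          rw [neg_pow, I6]; norm_num
        rw [hval] at h2
        linear_combination (-1/2 : ℂ) * h2
    · rw [hf.coeff_eq_zero (by rw [deg2]; exact hdeg),
        if_neg (by omega), if_neg (by omega)]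
      ring
  · rintro ⟨c, rfl⟩
    refine ⟨?_, ?_, ?_⟩
    · rw [hw, smul_smul]
      exact smul_homog _ _ hPp
    · intro g hg
      rw [hw, smul_smul, actPoly_smul, fixQ8 g hg]
    · rw [hw, smul_smul, actPoly_smul, fixB]
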